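/- Let n₊, μ₊, n₋, μ₋, t be an edge configuration with ⟨n₊,n₋⟩ ≠ −1. Then ⟨μ₊, log_{n₊}(n₋)⟩ = ⟨μ₋, log_{n₋}(n₊)⟩. -/

import Mathlib

open scoped InnerProductSpace

noncomputable section
open Classical

abbrev E3 : Type := EuclideanSpace ℝ (Fin 3)

/-- Cross product on `E3`. -/
def cross3 (a b : E3) : E3 :=
  (EuclideanSpace.equiv (Fin 3) ℝ).symm
    (crossProduct ((EuclideanSpace.equiv (Fin 3) ℝ) a) ((EuclideanSpace.equiv (Fin 3) ℝ) b))

/-- Geodesic distance on the unit sphere. -/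
def sphDist (n₁ n₂ : E3) : ℝ := Real.arccos ⟪n₁, n₂⟫_ℝ

/-- The logarithmic map of the unit sphere. -/
def sphLog (n₁ n₂ : E3) : E3 :=
  if n₂ = n₁ then 0
  else (Real.arccos ⟪n₁, n₂⟫_ℝ / ‖n₂ - ⟪n₁, n₂⟫_ℝ • n₁‖) • (n₂ - ⟪n₁, n₂⟫_ℝ • n₁)

/-- Parallel transport along the shortest geodesic of the unit sphere. -/
def ptrans (n₁ n₂ ξ : E3) : E3 :=
  ξ - (⟪ξ, n₂⟫_ℝ / (1 + ⟪n₂, n₁⟫_ℝ)) • (n₂ + n₁)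

lemma inner_eq_dot (x y : E3) :
    ⟪x, y⟫_ℝ = dotProduct ((EuclideanSpace.equiv (Fin 3) ℝ) x)
      ((EuclideanSpace.equiv (Fin 3) ℝ) y) := by
  simp [PiLp.inner_apply, dotProduct, RCLike.inner_apply, mul_comm]

theorem inner_co_normal_log_symm (np μp nm μm t : E3)
    (hnp : ‖np‖ = 1) (hμp : ‖μp‖ = 1) (hnm : ‖nm‖ = 1) (hμm : ‖μm‖ = 1) (ht : ‖t‖ = 1)
    (hcp : cross3 np μp = t) (hcm : cross3 nm μm = -t)
    (hne : ⟪np, nm⟫_ℝ ≠ -1) :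
    ⟪μp, sphLog np nm⟫_ℝ = ⟪μm, sphLog nm np⟫_ℝ := by
  set f := EuclideanSpace.equiv (Fin 3) ℝ with hf
  have hcp' : crossProduct (f np) (f μp) = f t := by
    rw [← hcp]; exact (f.apply_symm_apply _).symm
  have hcm' : crossProduct (f nm) (f μm) = f (-t) := by
    rw [← hcm]; exact (f.apply_symm_apply _).symm
  have hfneg : f (-t) = -(f t) := by simp
  -- inner products as dot products
  have htt : dotProduct (f t) (f t) = 1 := by
    rw [← inner_eq_dot, real_inner_self_eq_norm_sq, ht]; norm_num
  have hnpnp : dotProduct (f np) (f np) = 1 := by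
    rw [← inner_eq_dot, real_inner_self_eq_norm_sq, hnp]; norm_num
  have hnmnm : dotProduct (f nm) (f nm) = 1 := by
    rw [← inner_eq_dot, real_inner_self_eq_norm_sq, hnm]; norm_num
  -- orthogonality of normal and conormal
  have hnpμp : ⟪np, μp⟫_ℝ = 0 := by
    have h := cross_dot_cross (f np) (f μp) (f np) (f μp)
    rw [hcp', htt, hnpnp] at h
    have hμμ : dotProduct (f μp) (f μp) = 1 := by
      rw [← inner_eq_dot, real_inner_self_eq_norm_sq, hμp]; norm_num
    rw [hμμ, ← inner_eq_dot, ← inner_eq_dot] at h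
    rw [real_inner_comm μp np] at h
    have h0 : ⟪μp, np⟫_ℝ * ⟪μp, np⟫_ℝ = 0 := by linarith
    rw [real_inner_comm]
    exact mul_self_eq_zero.mp h0
  have hnmμm : ⟪nm, μm⟫_ℝ = 0 := by
    have h := cross_dot_cross (f nm) (f μm) (f nm) (f μm)
    rw [hcm', hfneg] at h
    have hμμ : dotProduct (f μm) (f μm) = 1 := by
      rw [← inner_eq_dot, real_inner_self_eq_norm_sq, hμm]; norm_num
    rw [neg_dotProduct, dotProduct_neg, neg_neg, htt, hnmnm, hμμ,
      ← inner_eq_dot, ← inner_eq_dot] at h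
    rw [real_inner_comm μm nm] at h
    have h0 : ⟪μm, nm⟫_ℝ * ⟪μm, nm⟫_ℝ = 0 := by linarith
    rw [real_inner_comm]
    exact mul_self_eq_zero.mp h0
  -- the key symmetry
  have hkey : ⟪μp, nm⟫_ℝ = ⟪μm, np⟫_ℝ := by
    have hA := cross_dot_cross (f np) (f μp) (f np) (f nm)
    have hB := cross_dot_cross (f nm) (f μm) (f np) (f nm)
    rw [hcp'] at hA
    rw [hcm', hfneg, neg_dotProduct] at hB
    rw [hnpnp, ← inner_eq_dot np nm, ← inner_eq_dot μp np, ← inner_eq_dot μp nm] at hA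
    rw [hnmnm, ← inner_eq_dot nm np, ← inner_eq_dot μm nm, ← inner_eq_dot μm np] at hB
    have hμpnp : ⟪μp, np⟫_ℝ = 0 := by rw [real_inner_comm]; exact hnpμp
    have hμmnm : ⟪μm, nm⟫_ℝ = 0 := by rw [real_inner_comm]; exact hnmμm
    rw [hμpnp] at hA
    rw [hμmnm] at hB
    nlinarith [hA, hB]
  -- now deal with sphLog
  by_cases hcase : nm = np
  · subst hcase; simp [sphLog]
  · have hcase' : np ≠ nm := fun h => hcase h.symm
    set s : ℝ := ⟪np, nm⟫_ℝ with hs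
    have hsymm : ⟪nm, np⟫_ℝ = s := by rw [real_inner_comm]
    have hnormsq1 : ‖nm - s • np‖ ^ 2 = 1 - s ^ 2 := by
      rw [← real_inner_self_eq_norm_sq]
      simp only [inner_sub_left, inner_sub_right, real_inner_smul_left, real_inner_smul_right]
      rw [real_inner_self_eq_norm_sq, real_inner_self_eq_norm_sq, hnp, hnm, hsymm, ← hs]
      ring
    have hnormsq2 : ‖np - s • nm‖ ^ 2 = 1 - s ^ 2 := by
      rw [← real_inner_self_eq_norm_sq]
      simp only [inner_sub_left, inner_sub_right, real_inner_smul_left, real_inner_smul_right]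
      rw [real_inner_self_eq_norm_sq, real_inner_self_eq_norm_sq, hnp, hnm, hsymm, ← hs]
      ring
    have hnormeq : ‖nm - s • np‖ = ‖np - s • nm‖ := by
      rw [← Real.sqrt_sq (norm_nonneg (nm - s • np)),
        ← Real.sqrt_sq (norm_nonneg (np - s • nm)), hnormsq1, hnormsq2]
    have hμpnp : ⟪μp, np⟫_ℝ = 0 := by rw [real_inner_comm]; exact hnpμp
    have hμmnm : ⟪μm, nm⟫_ℝ = 0 := by rw [real_inner_comm]; exact hnmμm
    rw [sphLog, sphLog, if_neg hcase, if_neg hcase']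
    rw [inner_smul_right, inner_smul_right, inner_sub_right, inner_sub_right,
      real_inner_smul_right, real_inner_smul_right, hsymm, ← hs, hμpnp, hμmnm, hkey,
      hnormeq]
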